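/- arXiv:2112.14729 — 2 statements merged into one kernel-verified Lean document; each statement's English description precedes it below -/
import Mathlib

section
/- For all n ∈ ℕ and all k₁, k₂ ∈ ℕ, the circular Laguerre polynomials satisfy the semigroup property L_{n,k₁} ⊠ₙ L_{n,k₂} = L_{n,k₁+k₂}, and moreover L_{n,0}(z) = (z − 1)^n. -/
/-- The finite free multiplicative convolution `⊠ₙ` of two polynomials of degree at most `n`:
`(p ⊠ₙ q)(z) = ∑_{j=0}^n (−1)^{n−j} (α_j β_j / C(n,j)) z^j`. -/
noncomputable def ffmc (n : ℕ) (p q : Polynomial ℂ) : Polynomial ℂ :=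
  ∑ j ∈ Finset.range (n + 1),
    Polynomial.C ((-1) ^ (n - j) * p.coeff j * q.coeff j / (n.choose j : ℂ)) * Polynomial.X ^ j

/-- The circular Laguerre polynomial
`L_{n,k}(z) = i^k ∑_{j=0}^n (−1)^{n−j} C(n,j) (j − n/2)^k z^j`. -/
noncomputable def circLaguerre (n k : ℕ) : Polynomial ℂ :=
  ∑ j ∈ Finset.range (n + 1),
    Polynomial.C (Complex.I ^ k * (-1) ^ (n - j) * (n.choose j : ℂ) * ((j : ℂ) - n / 2) ^ k) *
      Polynomial.X ^ j

lemma circLaguerre_coeff (n k j : ℕ) (hj : j < n + 1) :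
    (circLaguerre n k).coeff j
      = Complex.I ^ k * (-1) ^ (n - j) * (n.choose j : ℂ) * ((j : ℂ) - n / 2) ^ k := by
  rw [circLaguerre, Polynomial.finset_sum_coeff]
  simp only [Polynomial.coeff_C_mul, Polynomial.coeff_X_pow, mul_ite, mul_one, mul_zero]
  rw [Finset.sum_ite_eq (Finset.range (n+1))]
  simp [hj]

theorem stmt3 (n k₁ k₂ : ℕ) :
    ffmc n (circLaguerre n k₁) (circLaguerre n k₂) = circLaguerre n (k₁ + k₂) ∧
    circLaguerre n 0 = (Polynomial.X - Polynomial.C (1 : ℂ)) ^ n := by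
  constructor
  · rw [ffmc]
    conv_rhs => rw [circLaguerre]
    refine Finset.sum_congr rfl fun j hj => ?_
    rw [Finset.mem_range] at hj
    rw [circLaguerre_coeff n k₁ j hj, circLaguerre_coeff n k₂ j hj]
    congr 1
    have hc : ((n.choose j : ℂ)) ≠ 0 :=
      Nat.cast_ne_zero.mpr (Nat.choose_pos (Nat.lt_succ_iff.mp hj)).ne'
    have he : ((-1 : ℂ)) ^ (n - j) * (-1) ^ (n - j) = 1 := by
      rw [← pow_add]
      exact Even.neg_one_pow ⟨n - j, rfl⟩
    field_simp
    congr 1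
    rw [pow_add (((j : ℂ) * 2 - n) / 2)]
    linear_combination (Complex.I ^ k₁ * Complex.I ^ k₂ * (((j:ℂ)*2 - n)/2)^k₁ * (((j:ℂ)*2-n)/2)^k₂ * (n.choose j : ℂ) * (-1:ℂ)^(n-j)) * he
  · rw [circLaguerre, sub_eq_add_neg, ← Polynomial.C_neg, add_pow]
    refine Finset.sum_congr rfl fun j hj => ?_
    rw [Finset.mem_range, Nat.lt_succ_iff] at hj
    rw [← Polynomial.C_pow, ← Polynomial.C_eq_natCast, mul_assoc (Polynomial.X ^ j), ← Polynomial.C_mul, mul_comm (Polynomial.X ^ j)]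
    congr 1
    simp [mul_comm]
end

section
/- Fix t > 0. For θ ∈ ℍ let f_θ(x) = θ + t·tan x and let ζ_t(θ) denote the unique ζ ∈ ℍ with ζ − t·tan ζ = θ. Then the sequence of functions g_n : ℍ → ℂ defined by g_n(θ) = f_θ^{∘n}(θ) (the n-fold iterate of f_θ applied to the starting point θ itself) converges to ζ_t locally uniformly on ℍ as n → ∞. In particular ζ_t(θ) = θ + t·tan(θ + t·tan(θ + t·tan(θ + …))) for all θ ∈ ℍ. -/
open Complex Set Metric

private lemma my_sin_re (z : ℂ) : (Complex.sin z).re = Real.sin z.re * Real.cosh z.im := by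
  rw [Complex.sin_eq]; simp [Complex.sin_ofReal_re, Complex.cos_ofReal_re, Complex.sinh_ofReal_re, Complex.cosh_ofReal_re]

private lemma my_sin_im (z : ℂ) : (Complex.sin z).im = Real.cos z.re * Real.sinh z.im := by
  rw [Complex.sin_eq]; simp [Complex.sin_ofReal_re, Complex.cos_ofReal_re, Complex.sinh_ofReal_re, Complex.cosh_ofReal_re]

private lemma my_cos_re (z : ℂ) : (Complex.cos z).re = Real.cos z.re * Real.cosh z.im := by
  rw [Complex.cos_eq]; simp [Complex.sin_ofReal_re, Complex.cos_ofReal_re, Complex.sinh_ofReal_re, Complex.cosh_ofReal_re]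

private lemma my_cos_im (z : ℂ) : (Complex.cos z).im = -(Real.sin z.re * Real.sinh z.im) := by
  rw [Complex.cos_eq]; simp [Complex.sin_ofReal_re, Complex.cos_ofReal_re, Complex.sinh_ofReal_re, Complex.cosh_ofReal_re]

private lemma my_cos_ne {z : ℂ} (hz : 0 < z.im) : Complex.cos z ≠ 0 := by
  intro h
  obtain ⟨k, hk⟩ := Complex.cos_eq_zero_iff.1 h
  have : z.im = 0 := by rw [hk]; simp
  linarith

private lemma my_tan_im_pos {z : ℂ} (hz : 0 < z.im) : 0 < (Complex.tan z).im := by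
  rw [Complex.tan_eq_sin_div_cos, Complex.div_im, div_sub_div_same]
  apply div_pos
  · rw [my_sin_re, my_sin_im, my_cos_re, my_cos_im]
    have key : Real.cos z.re * Real.sinh z.im * (Real.cos z.re * Real.cosh z.im) -
        Real.sin z.re * Real.cosh z.im * -(Real.sin z.re * Real.sinh z.im) =
        Real.sinh z.im * Real.cosh z.im := by
      linear_combination (Real.sinh z.im * Real.cosh z.im) * (Real.sin_sq_add_cos_sq z.re)
    rw [key]
    exact mul_pos (Real.sinh_pos_iff.2 hz) (Real.cosh_pos z.im)
  · exact Complex.normSq_pos.2 (my_cos_ne hz)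

private lemma my_abs_tan_le {z : ℂ} {m : ℝ} (hm : 0 < m) (hz : m ≤ z.im) :
    ‖Complex.tan z‖ ≤ Real.sqrt (1 + 1 / Real.sinh m ^ 2) := by
  have hz0 : 0 < z.im := lt_of_lt_of_le hm hz
  have hcos := Complex.normSq_pos.2 (my_cos_ne hz0)
  have hsm : 0 < Real.sinh m := Real.sinh_pos_iff.2 hm
  have hsy : Real.sinh m ≤ Real.sinh z.im := Real.sinh_le_sinh.2 hz
  rw [Complex.norm_def]
  apply Real.sqrt_le_sqrt
  rw [Complex.tan_eq_sin_div_cos, Complex.normSq_div, div_le_iff₀ hcos]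
  have h1 : 1 / Real.sinh m ^ 2 * Real.sinh m ^ 2 = 1 := by field_simp
  have h2 : 0 < 1 / Real.sinh m ^ 2 := by positivity
  rw [Complex.normSq_apply, Complex.normSq_apply, my_sin_re, my_sin_im, my_cos_re, my_cos_im]
  nlinarith [Real.sin_sq_add_cos_sq z.re, Real.cosh_sq z.im,
    mul_le_mul_of_nonneg_left (mul_le_mul hsy hsy hsm.le (by linarith)) h2.le,
    sq_nonneg (Real.sin z.re), sq_nonneg (Real.cos z.re), Real.cosh_pos z.im]

private lemma my_normSq_sub_conj (p q : ℂ) :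
    Complex.normSq (p - (starRingEnd ℂ) q) = Complex.normSq (p - q) + 4 * p.im * q.im := by
  simp [Complex.normSq_apply, Complex.sub_re, Complex.sub_im, Complex.conj_re, Complex.conj_im]
  ring

private lemma my_abs_lt {p q : ℂ} (hp : 0 < p.im) (hq : 0 < q.im) :
    ‖p - q‖ < ‖p - (starRingEnd ℂ) q‖ := by
  rw [Complex.norm_def, Complex.norm_def]
  apply Real.sqrt_lt_sqrt (Complex.normSq_nonneg _)
  rw [my_normSq_sub_conj]; nlinarith

private lemma my_sub_conj_ne {p q : ℂ} (hp : 0 < p.im) (hq : 0 < q.im) :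
    p - (starRingEnd ℂ) q ≠ 0 := by
  intro h
  have h2 : (p - (starRingEnd ℂ) q).im = 0 := by rw [h]; simp
  simp only [Complex.sub_im, Complex.conj_im] at h2
  linarith

private lemma schwarzPick {f : ℂ → ℂ} (hd : DifferentiableOn ℂ f {z : ℂ | 0 < z.im})
    (hmap : Set.MapsTo f {z : ℂ | 0 < z.im} {z : ℂ | 0 < z.im})
    {z w : ℂ} (hz : 0 < z.im) (hw : 0 < w.im) :
    ‖f z - f w‖ * ‖z - (starRingEnd ℂ) w‖ ≤
      ‖z - w‖ * ‖f z - (starRingEnd ℂ) (f w)‖ := by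
  have hfz : 0 < (f z).im := hmap hz
  have hfw : 0 < (f w).im := hmap hw
  set ψ : ℂ → ℂ := fun u => (w - (starRingEnd ℂ) w * u) / (1 - u) with hψ
  have hone : ∀ u : ℂ, u ∈ ball (0:ℂ) 1 → (1:ℂ) - u ≠ 0 := by
    intro u hu
    rw [mem_ball_zero_iff] at hu
    intro h
    rw [sub_eq_zero] at h
    rw [← h] at hu
    simp at hu
  have hψim : ∀ u : ℂ, u ∈ ball (0:ℂ) 1 → 0 < (ψ u).im := by
    intro u hu
    have h1 : (ψ u).im = (w.im * (1 - Complex.normSq u)) / Complex.normSq (1 - u) := by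
      show ((w - (starRingEnd ℂ) w * u) / (1 - u)).im = _
      rw [Complex.div_im, div_sub_div_same]
      congr 1
      simp only [Complex.sub_re, Complex.sub_im, Complex.mul_re, Complex.mul_im,
        Complex.conj_re, Complex.conj_im, Complex.one_re, Complex.one_im, Complex.normSq_apply]
      ring
    rw [h1]
    have h2 : Complex.normSq u < 1 := by
      rw [mem_ball_zero_iff] at hu
      rw [← Complex.sq_norm]
      nlinarith [norm_nonneg u]
    have h3 : 0 < Complex.normSq (1 - u) := Complex.normSq_pos.2 (hone u hu)
    exact div_pos (by nlinarith) h3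
  have hψmaps : Set.MapsTo ψ (ball (0:ℂ) 1) {z : ℂ | 0 < z.im} := fun u hu => hψim u hu
  have hψdiff : DifferentiableOn ℂ ψ (ball (0:ℂ) 1) := by
    apply DifferentiableOn.div
    · exact (differentiableOn_const _).sub ((differentiableOn_const _).mul differentiableOn_id)
    · exact (differentiableOn_const _).sub differentiableOn_id
    · exact hone
  set g : ℂ → ℂ := fun u => (f (ψ u) - f w) / (f (ψ u) - (starRingEnd ℂ) (f w)) with hg
  have hden : ∀ u : ℂ, u ∈ ball (0:ℂ) 1 → f (ψ u) - (starRingEnd ℂ) (f w) ≠ 0 := by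
    intro u hu
    exact my_sub_conj_ne (hmap (hψim u hu)) hfw
  have hgd : DifferentiableOn ℂ g (ball (0:ℂ) 1) := by
    apply DifferentiableOn.div
    · exact ((hd.comp hψdiff hψmaps).sub (differentiableOn_const _))
    · exact ((hd.comp hψdiff hψmaps).sub (differentiableOn_const _))
    · exact hden
  have hgm : Set.MapsTo g (ball (0:ℂ) 1) (ball (0:ℂ) 1) := by
    intro u hu
    rw [mem_ball_zero_iff]
    show ‖(f (ψ u) - f w) / (f (ψ u) - (starRingEnd ℂ) (f w))‖ < 1
    rw [norm_div]
    have d1 : 0 < ‖f (ψ u) - (starRingEnd ℂ) (f w)‖ :=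
      norm_pos_iff.2 (hden u hu)
    exact (div_lt_one d1).2 (my_abs_lt (hmap (hψim u hu)) hfw)
  have hψ0 : ψ 0 = w := by
    show (w - (starRingEnd ℂ) w * 0) / (1 - 0) = w
    simp
  have hg0 : g 0 = 0 := by
    show (f (ψ 0) - f w) / (f (ψ 0) - (starRingEnd ℂ) (f w)) = 0
    rw [hψ0, sub_self, zero_div]
  have hzw : z - (starRingEnd ℂ) w ≠ 0 := my_sub_conj_ne hz hw
  have hww : w - (starRingEnd ℂ) w ≠ 0 := my_sub_conj_ne hw hw
  set u₀ : ℂ := (z - w) / (z - (starRingEnd ℂ) w) with hu₀def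
  have habs_u₀ : ‖u₀‖ < 1 := by
    rw [hu₀def, norm_div]
    exact (div_lt_one (norm_pos_iff.2 hzw)).2 (my_abs_lt hz hw)
  have h1 : (1:ℂ) - u₀ = (w - (starRingEnd ℂ) w) / (z - (starRingEnd ℂ) w) := by
    rw [hu₀def, eq_div_iff hzw, sub_mul, one_mul, div_mul_cancel₀ _ hzw]
    ring
  have h1ne : (1:ℂ) - u₀ ≠ 0 := by rw [h1]; exact div_ne_zero hww hzw
  have hψu₀ : ψ u₀ = z := by
    show (w - (starRingEnd ℂ) w * u₀) / (1 - u₀) = z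
    rw [div_eq_iff h1ne, h1, hu₀def]
    field_simp
    ring
  have main := Complex.norm_le_norm_of_mapsTo_ball hgd (hgm.mono_right ball_subset_closedBall) hg0 habs_u₀
  have hgu₀ : g u₀ = (f z - f w) / (f z - (starRingEnd ℂ) (f w)) := by
    show (f (ψ u₀) - f w) / (f (ψ u₀) - (starRingEnd ℂ) (f w)) = _
    rw [hψu₀]
  rw [hgu₀, hu₀def, norm_div, norm_div] at main
  have d1 : 0 < ‖f z - (starRingEnd ℂ) (f w)‖ :=
    norm_pos_iff.2 (my_sub_conj_ne hfz hfw)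
  have d2 : 0 < ‖z - (starRingEnd ℂ) w‖ := norm_pos_iff.2 hzw
  rw [div_le_div_iff₀ d1 d2] at main
  exact main

private noncomputable def myT (m : ℝ) : ℝ := Real.sqrt (1 + 1 / Real.sinh m ^ 2)
private noncomputable def myU (t m M : ℝ) : ℝ := M + t * myT m
private noncomputable def myR (t m : ℝ) : ℝ := 2 * t * myT m
private noncomputable def myQ (t m M : ℝ) : ℝ := myR t m ^ 2 + 4 * myU t m M ^ 2
private noncomputable def myk (t m M : ℝ) : ℝ := Real.sqrt (1 - 4 * m ^ 2 / myQ t m M)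
private noncomputable def myC (t m M : ℝ) : ℝ := myR t m + 2 * myU t m M

private lemma myT_pos {m : ℝ} (hm : 0 < m) : 0 < myT m := by
  have : (0:ℝ) < 1 + 1 / Real.sinh m ^ 2 := by
    have := Real.sinh_pos_iff.2 hm
    positivity
  exact Real.sqrt_pos.2 this

private lemma myQ_pos {t m M : ℝ} (ht : 0 < t) (hm : 0 < m) (hmM : m ≤ M) : 0 < myQ t m M := by
  have h1 : 0 < myR t m := by
    have := myT_pos hm
    unfold myR; positivity
  unfold myQ; nlinarith

private lemma myk_nonneg (t m M : ℝ) : 0 ≤ myk t m M := Real.sqrt_nonneg _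

private lemma myk_sq {t m M : ℝ} (ht : 0 < t) (hm : 0 < m) (hmM : m ≤ M) :
    myk t m M ^ 2 = 1 - 4 * m ^ 2 / myQ t m M := by
  apply Real.sq_sqrt
  have hQ := myQ_pos ht hm hmM
  have hU : m ≤ myU t m M := by
    have := (myT_pos hm).le
    unfold myU; nlinarith
  have h4 : 4 * m ^ 2 ≤ myQ t m M := by
    unfold myQ; nlinarith [sq_nonneg (myR t m)]
  rw [sub_nonneg, div_le_one hQ]; exact h4

private lemma myk_lt_one {t m M : ℝ} (ht : 0 < t) (hm : 0 < m) (hmM : m ≤ M) :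
    myk t m M < 1 := by
  have h1 := myk_sq ht hm hmM
  have h2 := myk_nonneg t m M
  have hQ := myQ_pos ht hm hmM
  have : 0 < 4 * m ^ 2 / myQ t m M := by positivity
  nlinarith

set_option maxHeartbeats 1000000 in
private lemma key {t m M : ℝ} (ht : 0 < t) (hm : 0 < m) (hmM : m ≤ M)
    {θ : ℂ} (hθm : m ≤ θ.im) (hθM : θ.im ≤ M)
    {ζ : ℂ} (hζ : 0 < ζ.im) (hfix : θ + ↑t * Complex.tan ζ = ζ)
    (n : ℕ) (hn : 1 ≤ n) :
    ‖(fun x : ℂ => θ + ↑t * Complex.tan x)^[n] θ - ζ‖ ≤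
      myC t m M * myk t m M ^ n := by
  set T := myT m with hT
  set U := myU t m M with hU
  set R := myR t m with hR
  set Q := myQ t m M with hQdef
  set k := myk t m M with hk
  set F : ℂ → ℂ := fun x : ℂ => θ + ↑t * Complex.tan x with hF
  have hθS : 0 < θ.im := lt_of_lt_of_le hm hθm
  have hTpos := myT_pos hm
  have hQ := myQ_pos ht hm hmM
  have hk2 := myk_sq ht hm hmM
  have hknn := myk_nonneg t m M
  -- imaginary part of F
  have him : ∀ z : ℂ, (F z).im = θ.im + t * (Complex.tan z).im := by
    intro z
    show (θ + ↑t * Complex.tan z).im = _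
    simp [Complex.add_im, Complex.mul_im]
  have hre' : ∀ z : ℂ, (F z).re = θ.re + t * (Complex.tan z).re := by
    intro z
    show (θ + ↑t * Complex.tan z).re = _
    simp [Complex.add_re, Complex.mul_re]
  -- orbit facts
  have hlow : ∀ j : ℕ, θ.im ≤ (F^[j] θ).im := by
    intro j
    induction j with
    | zero => simp
    | succ p ih =>
      rw [Function.iterate_succ_apply', him]
      have h1 : 0 < (F^[p] θ).im := lt_of_lt_of_le hθS ih
      have h2 := my_tan_im_pos h1
      nlinarith
  have hpos : ∀ j : ℕ, 0 < (F^[j] θ).im := fun j => lt_of_lt_of_le hθS (hlow j)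
  have hmemb : ∀ j : ℕ, m ≤ (F^[j] θ).im := fun j => le_trans hθm (hlow j)
  have htanim : ∀ z : ℂ, m ≤ z.im → (Complex.tan z).im ≤ T := by
    intro z h
    calc (Complex.tan z).im ≤ |(Complex.tan z).im| := le_abs_self _
    _ ≤ ‖Complex.tan z‖ := Complex.abs_im_le_norm _
    _ ≤ T := my_abs_tan_le hm h
  have htanre : ∀ z : ℂ, m ≤ z.im → |(Complex.tan z).re| ≤ T := by
    intro z h
    calc |(Complex.tan z).re| ≤ ‖Complex.tan z‖ := Complex.abs_re_le_norm _
    _ ≤ T := my_abs_tan_le hm h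
  have hupp : ∀ j : ℕ, 1 ≤ j → (F^[j] θ).im ≤ U := by
    intro j hj
    obtain ⟨p, rfl⟩ : ∃ p, j = p + 1 := ⟨j - 1, by omega⟩
    rw [Function.iterate_succ_apply', him]
    have h1 := htanim _ (hmemb p)
    have : t * (Complex.tan (F^[p] θ)).im ≤ t * T := by nlinarith
    rw [hU]; unfold myU; rw [← hT]; linarith
  -- ζ facts
  have hζim : ζ.im = θ.im + t * (Complex.tan ζ).im := by
    have := congrArg Complex.im hfix
    simp only [Complex.add_im, Complex.mul_im, Complex.ofReal_re, Complex.ofReal_im,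
      zero_mul, add_zero] at this
    linarith [this]
  have hζre : ζ.re = θ.re + t * (Complex.tan ζ).re := by
    have := congrArg Complex.re hfix
    simp only [Complex.add_re, Complex.mul_re, Complex.ofReal_re, Complex.ofReal_im,
      zero_mul, sub_zero] at this
    linarith [this]
  have hζθ : θ.im < ζ.im := by
    have := my_tan_im_pos hζ
    nlinarith
  have hζm : m ≤ ζ.im := le_trans hθm hζθ.le
  have hζU : ζ.im ≤ U := by
    have h1 := htanim ζ hζm
    have : t * (Complex.tan ζ).im ≤ t * T := by nlinarith
    rw [hU]; unfold myU; rw [← hT]; linarith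
  -- real part bound
  have hreb : ∀ j : ℕ, 1 ≤ j → |(F^[j] θ).re - ζ.re| ≤ R := by
    intro j hj
    obtain ⟨p, rfl⟩ : ∃ p, j = p + 1 := ⟨j - 1, by omega⟩
    rw [Function.iterate_succ_apply', hre', hζre]
    have h1 := htanre _ (hmemb p)
    have h2 := htanre ζ hζm
    have : θ.re + t * (Complex.tan (F^[p] θ)).re - (θ.re + t * (Complex.tan ζ).re)
        = t * ((Complex.tan (F^[p] θ)).re - (Complex.tan ζ).re) := by ring
    rw [this, hR]; unfold myR; rw [← hT]
    rw [abs_mul, abs_of_pos ht]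
    have := abs_sub_abs_le_abs_sub (Complex.tan (F^[p] θ)).re (Complex.tan ζ).re
    have h3 := abs_sub (Complex.tan (F^[p] θ)).re (Complex.tan ζ).re
    calc t * |(Complex.tan (F^[p] θ)).re - (Complex.tan ζ).re|
        ≤ t * (|(Complex.tan (F^[p] θ)).re| + |(Complex.tan ζ).re|) := by
          have := abs_sub (Complex.tan (F^[p] θ)).re (Complex.tan ζ).re
          nlinarith
    _ ≤ 2 * t * T := by nlinarith
  -- Schwarz-Pick inequality for the shifted map
  set f : ℂ → ℂ := fun u => θ + ↑t * Complex.tan u - ↑θ.im * Complex.I with hf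
  have htand : DifferentiableOn ℂ Complex.tan {z : ℂ | 0 < z.im} := by
    intro u hu
    exact (Complex.differentiableAt_tan.2 (my_cos_ne hu)).differentiableWithinAt
  have hd : DifferentiableOn ℂ f {z : ℂ | 0 < z.im} := by
    intro u hu
    have h1 : DifferentiableAt ℂ (fun u : ℂ => θ + ↑t * Complex.tan u - ↑θ.im * Complex.I) u := by
      have h2 : DifferentiableAt ℂ Complex.tan u :=
        Complex.differentiableAt_tan.2 (my_cos_ne hu)
      fun_prop
    exact h1.differentiableWithinAt
  have hmapf : Set.MapsTo f {z : ℂ | 0 < z.im} {z : ℂ | 0 < z.im} := by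
    intro u hu
    show 0 < (θ + ↑t * Complex.tan u - ↑θ.im * Complex.I).im
    simp only [Complex.sub_im, Complex.add_im, Complex.mul_im, Complex.ofReal_re,
      Complex.ofReal_im, Complex.I_im, Complex.I_re, zero_mul, add_zero, mul_one, mul_zero,
      zero_add]
    have := my_tan_im_pos (show 0 < u.im from hu)
    nlinarith
  have hfζ : f ζ = ζ - ↑θ.im * Complex.I := by
    show θ + ↑t * Complex.tan ζ - ↑θ.im * Complex.I = _
    rw [hfix]
  have hSP : ∀ j : ℕ,
      ‖F^[j+1] θ - ζ‖ * ‖F^[j] θ - (starRingEnd ℂ) ζ‖ ≤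
      ‖F^[j] θ - ζ‖ *
        ‖F^[j+1] θ - (starRingEnd ℂ) ζ - 2 * ↑θ.im * Complex.I‖ := by
    intro j
    have h := schwarzPick hd hmapf (hpos j) hζ
    have e0 : f (F^[j] θ) = F^[j+1] θ - ↑θ.im * Complex.I := by
      rw [Function.iterate_succ_apply']
    have e1 : f (F^[j] θ) - f ζ = F^[j+1] θ - ζ := by
      rw [e0, hfζ]; ring
    have e2 : f (F^[j] θ) - (starRingEnd ℂ) (f ζ) =
        F^[j+1] θ - (starRingEnd ℂ) ζ - 2 * ↑θ.im * Complex.I := by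
      rw [e0, hfζ, map_sub, map_mul, Complex.conj_I, Complex.conj_ofReal]
      ring
    rw [e1, e2] at h
    exact h
  -- the gain estimate
  have hgain : ∀ j : ℕ, 1 ≤ j →
      ‖F^[j] θ - (starRingEnd ℂ) ζ - 2 * ↑θ.im * Complex.I‖ ≤
      k * ‖F^[j] θ - (starRingEnd ℂ) ζ‖ := by
    intro j hj
    set a : ℝ := (F^[j] θ).re - ζ.re with ha
    set s : ℝ := (F^[j] θ).im + ζ.im with hs
    clear_value a s
    have hn1 : Complex.normSq (F^[j] θ - (starRingEnd ℂ) ζ - 2 * ↑θ.im * Complex.I)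
        = a ^ 2 + (s - 2 * θ.im) ^ 2 := by
      simp only [Complex.normSq_apply, Complex.sub_re, Complex.sub_im, Complex.conj_re,
        Complex.conj_im, Complex.mul_re, Complex.mul_im, Complex.I_re, Complex.I_im,
        Complex.ofReal_re, Complex.ofReal_im, Complex.re_ofNat, Complex.im_ofNat, ha, hs]
      ring
    have hn2 : Complex.normSq (F^[j] θ - (starRingEnd ℂ) ζ) = a ^ 2 + s ^ 2 := by
      simp only [Complex.normSq_apply, Complex.sub_re, Complex.sub_im, Complex.conj_re,
        Complex.conj_im, ha, hs]
      ring
    have haR : |a| ≤ R := by rw [ha]; exact hreb j hj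
    have ha2 : a ^ 2 ≤ R ^ 2 := by
      have h1 := abs_le.1 haR
      nlinarith [h1.1, h1.2]
    have hs1 : s ≤ 2 * U := by
      have := hupp j hj
      rw [hs]; linarith
    have hs0 : 0 < s := by
      have := hpos j
      rw [hs]; linarith
    have hs2 : s ^ 2 ≤ 4 * U ^ 2 := by nlinarith
    have hsb : 2 * θ.im ≤ s := by
      have h1 := hlow j
      rw [hs]; linarith
    have habs2 : a ^ 2 + s ^ 2 ≤ Q := by
      rw [hQdef]; unfold myQ; rw [← hR, ← hU]; linarith
    have h4m : 4 * m ^ 2 ≤ 4 * θ.im * (s - θ.im) := by nlinarith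
    have hz1 : 4 * m ^ 2 / Q * (a ^ 2 + s ^ 2) ≤ 4 * m ^ 2 := by
      have h1 : (0:ℝ) ≤ 4 * m ^ 2 / Q := by positivity
      have h2 := mul_le_mul_of_nonneg_left habs2 h1
      rwa [div_mul_cancel₀ _ (ne_of_gt hQ)] at h2
    clear_value T U R Q k
    have hkey : a ^ 2 + (s - 2 * θ.im) ^ 2 ≤ k ^ 2 * (a ^ 2 + s ^ 2) := by
      have e : k ^ 2 * (a ^ 2 + s ^ 2) = (a ^ 2 + s ^ 2) - 4 * m ^ 2 / Q * (a ^ 2 + s ^ 2) := by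
        rw [hk, hk2, ← hQdef]; ring
      have expand : a ^ 2 + (s - 2 * θ.im) ^ 2 = a ^ 2 + s ^ 2 - 4 * θ.im * (s - θ.im) := by
        ring
      linarith [expand, e, hz1, h4m]
    rw [Complex.norm_def, Complex.norm_def, hn1, hn2]
    calc Real.sqrt (a ^ 2 + (s - 2 * θ.im) ^ 2)
        ≤ Real.sqrt (k ^ 2 * (a ^ 2 + s ^ 2)) := Real.sqrt_le_sqrt hkey
    _ = k * Real.sqrt (a ^ 2 + s ^ 2) := by
        have hknn' : 0 ≤ k := by rw [hk]; exact hknn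
        rw [Real.sqrt_mul (sq_nonneg k), Real.sqrt_sq hknn']
  -- iterate the contraction
  have hiter : ∀ j : ℕ, ‖F^[j] θ - ζ‖ ≤
      k ^ j * ‖F^[j] θ - (starRingEnd ℂ) ζ‖ := by
    intro j
    induction j with
    | zero =>
      rw [pow_zero, one_mul]
      exact (my_abs_lt hθS hζ).le
    | succ p ih =>
      have hden : 0 < ‖F^[p] θ - (starRingEnd ℂ) ζ‖ :=
        norm_pos_iff.2 (my_sub_conj_ne (hpos p) hζ)
      have c1 := hSP p
      have c2 := hgain (p+1) (by omega)
      have c3 : ‖F^[p] θ - ζ‖ *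
          ‖F^[p+1] θ - (starRingEnd ℂ) ζ - 2 * ↑θ.im * Complex.I‖ ≤
          ‖F^[p] θ - ζ‖ * (k * ‖F^[p+1] θ - (starRingEnd ℂ) ζ‖) :=
        mul_le_mul_of_nonneg_left c2 (norm_nonneg _)
      have c4 : ‖F^[p] θ - ζ‖ * (k * ‖F^[p+1] θ - (starRingEnd ℂ) ζ‖) ≤
          (k ^ p * ‖F^[p] θ - (starRingEnd ℂ) ζ‖) *
          (k * ‖F^[p+1] θ - (starRingEnd ℂ) ζ‖) := by
        exact mul_le_mul_of_nonneg_right ih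
          (mul_nonneg hknn (norm_nonneg _))
      have c5 : ‖F^[p+1] θ - ζ‖ * ‖F^[p] θ - (starRingEnd ℂ) ζ‖ ≤
          (k ^ (p+1) * ‖F^[p+1] θ - (starRingEnd ℂ) ζ‖) *
          ‖F^[p] θ - (starRingEnd ℂ) ζ‖ := by
        calc ‖F^[p+1] θ - ζ‖ * ‖F^[p] θ - (starRingEnd ℂ) ζ‖
            ≤ _ := c1
        _ ≤ _ := le_trans c3 c4
        _ = (k ^ (p+1) * ‖F^[p+1] θ - (starRingEnd ℂ) ζ‖) *
            ‖F^[p] θ - (starRingEnd ℂ) ζ‖ := by ring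
      exact le_of_mul_le_mul_right c5 hden
  -- conclude
  have hdenb : ‖F^[n] θ - (starRingEnd ℂ) ζ‖ ≤ myC t m M := by
    have h1 := Complex.norm_le_abs_re_add_abs_im (F^[n] θ - (starRingEnd ℂ) ζ)
    have h2 : |(F^[n] θ - (starRingEnd ℂ) ζ).re| ≤ R := by
      simp only [Complex.sub_re, Complex.conj_re]
      exact hreb n hn
    have h3 : |(F^[n] θ - (starRingEnd ℂ) ζ).im| ≤ 2 * U := by
      simp only [Complex.sub_im, Complex.conj_im, sub_neg_eq_add]
      rw [abs_of_pos (by linarith [hpos n, hζ])]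
      linarith [hupp n hn, hζU]
    unfold myC; rw [← hR, ← hU]
    linarith
  calc ‖F^[n] θ - ζ‖ ≤ k ^ n * ‖F^[n] θ - (starRingEnd ℂ) ζ‖ := hiter n
  _ ≤ k ^ n * myC t m M := by
      exact mul_le_mul_of_nonneg_left hdenb (pow_nonneg hknn n)
  _ = myC t m M * myk t m M ^ n := by rw [hk]; ring


theorem stmt14 (t : ℝ) (ht : 0 < t) (ζt : ℂ → ℂ)
    (hζt : ∀ θ : ℂ, 0 < θ.im → 0 < (ζt θ).im ∧ ζt θ - t * Complex.tan (ζt θ) = θ) :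
    TendstoLocallyUniformlyOn
      (fun (n : ℕ) (θ : ℂ) => (fun x : ℂ => θ + t * Complex.tan x)^[n] θ)
      ζt Filter.atTop {θ : ℂ | 0 < θ.im} := by
  have hopen : IsOpen {θ : ℂ | 0 < θ.im} := by
    have h : {θ : ℂ | 0 < θ.im} = Complex.im ⁻¹' Set.Ioi 0 := rfl
    rw [h]
    exact isOpen_Ioi.preimage Complex.continuous_im
  rw [tendstoLocallyUniformlyOn_iff_forall_isCompact hopen]
  intro K hK hKc
  rcases K.eq_empty_or_nonempty with rfl | hne
  · exact tendstoUniformlyOn_empty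
  obtain ⟨θ₀, hθ₀K, hmin⟩ := hKc.exists_isMinOn hne Complex.continuous_im.continuousOn
  obtain ⟨θ₁, hθ₁K, hmax⟩ := hKc.exists_isMaxOn hne Complex.continuous_im.continuousOn
  set m := θ₀.im with hmdef
  set M := θ₁.im with hMdef
  have hm : 0 < m := hK hθ₀K
  have hmM : m ≤ M := hmin hθ₁K
  rw [Metric.tendstoUniformlyOn_iff]
  intro ε hε
  have hk1 : myk t m M < 1 := myk_lt_one ht hm hmM
  have hknn := myk_nonneg t m M
  have htend : Filter.Tendsto (fun n : ℕ => myC t m M * myk t m M ^ n)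
      Filter.atTop (nhds 0) := by
    have h1 := tendsto_pow_atTop_nhds_zero_of_lt_one hknn hk1
    have h2 := h1.const_mul (myC t m M)
    simpa using h2
  have hev : ∀ᶠ n : ℕ in Filter.atTop, myC t m M * myk t m M ^ n < ε :=
    htend.eventually (gt_mem_nhds hε)
  filter_upwards [hev, Filter.eventually_ge_atTop 1] with n h1 h2
  intro θ hθK
  have hθS : 0 < θ.im := hK hθK
  obtain ⟨hζpos, hζeq⟩ := hζt θ hθS
  have hfix : θ + ↑t * Complex.tan (ζt θ) = ζt θ := by
    linear_combination (-1 : ℂ) * hζeq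
  have hθm : m ≤ θ.im := hmin hθK
  have hθM : θ.im ≤ M := hmax hθK
  have hb := key ht hm hmM hθm hθM hζpos hfix n h2
  calc dist (ζt θ) ((fun x : ℂ => θ + ↑t * Complex.tan x)^[n] θ)
      = ‖(fun x : ℂ => θ + ↑t * Complex.tan x)^[n] θ - ζt θ‖ := by
        rw [dist_comm, Complex.dist_eq]
  _ ≤ myC t m M * myk t m M ^ n := hb
  _ < ε := h1
end
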